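/- Let n ≥ 2 and s ∈ (0,1). Let f : ℝⁿ → ℝ be measurable and compactly supported. Then ‖f‖²_{L^{2n/(n−2s)}(ℝⁿ)} ≤ C(n,s) ∫_{ℝⁿ}∫_{ℝⁿ} |f(x)−f(y)|²/|x−y|^{n+2s} dx dy for a suitable constant C(n,s) > 0 depending only on n and s. -/

import Mathlib

open MeasureTheory Set Metric Filter
open scoped ENNReal Topology

section FracAux

lemma tsum_rpow_le_rpow_tsum {ι : Type*} (x : ι → ℝ≥0∞) {q : ℝ} (hq : 1 ≤ q) :
    ∑' i, x i ^ q ≤ (∑' i, x i) ^ q := by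
  set T := ∑' i, x i with hT
  rcases eq_or_ne T ⊤ with h | h
  · rw [h, ENNReal.top_rpow_of_pos (by linarith)]; exact le_top
  · have key : ∀ i, x i ^ q ≤ x i * T ^ (q - 1) := by
      intro i
      rcases eq_or_ne (x i) 0 with h0 | h0
      · rw [h0, ENNReal.zero_rpow_of_pos (by linarith : (0:ℝ) < q), zero_mul]
      · have hxT : x i ≤ T := ENNReal.le_tsum i
        have hxt : x i ≠ ⊤ := ne_top_of_le_ne_top h hxT
        have e1 : (1:ℝ) + (q - 1) = q := by ring
        calc x i ^ q = x i ^ ((1:ℝ) + (q - 1)) := by rw [e1]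
          _ = x i ^ (1:ℝ) * x i ^ (q-1) := ENNReal.rpow_add _ _ h0 hxt
          _ ≤ x i * T ^ (q-1) := by
              rw [ENNReal.rpow_one]
              exact mul_le_mul_right (ENNReal.rpow_le_rpow hxT (by linarith)) _
    calc ∑' i, x i ^ q ≤ ∑' i, x i * T ^ (q-1) := ENNReal.tsum_le_tsum key
      _ = T * T ^ (q-1) := ENNReal.tsum_mul_right
      _ ≤ T ^ q := by
          rcases eq_or_ne T 0 with h0 | h0
          · simp [h0]
          · calc T * T ^ (q-1) = T ^ (1:ℝ) * T ^ (q-1) := by rw [ENNReal.rpow_one]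
              _ = T ^ ((1:ℝ) + (q-1)) := (ENNReal.rpow_add _ _ h0 h).symm
              _ ≤ T ^ q := le_of_eq (by rw [show (1:ℝ) + (q-1) = q by ring])


lemma key_summation {θ : ℝ} (hθ0 : 0 < θ) (hθ1 : θ < 1) :
    ∃ C : ℝ, 0 < C ∧ ∀ (a : ℤ → ℝ≥0∞) (M : ℝ≥0∞), M ≠ ⊤ → (∀ k, a k ≤ M) →
      (∀ ⦃j k : ℤ⦄, j ≤ k → a k ≤ a j) →
      ∑' k : ℤ, (4:ℝ≥0∞) ^ (k:ℝ) * a k ^ (1-θ) ≤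
        ENNReal.ofReal C * ∑' k : ℤ, (4:ℝ≥0∞) ^ (k:ℝ) * a (k+1) * a k ^ (-θ) := by
  set β : ℝ := 1 - θ with hβdef
  have hβ0 : 0 < β := by simp only [hβdef]; linarith
  set ε : ℝ := (8:ℝ) ^ (-(1/β)) with hεdef
  have hε0 : 0 < ε := Real.rpow_pos_of_pos (by norm_num) _
  have hεβ : ε ^ β = 1/8 := by
    rw [hεdef, ← Real.rpow_mul (by norm_num : (0:ℝ) ≤ 8)]
    rw [show -(1/β) * β = -1 by field_simp]
    rw [Real.rpow_neg_one]; norm_num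
  refine ⟨8 * ε ^ (-θ), by positivity, ?_⟩
  intro a M hM haM hmono
  set R := ∑' k : ℤ, (4:ℝ≥0∞) ^ (k:ℝ) * a (k+1) * a k ^ (-θ) with hRdef
  set b : ℤ → ℝ≥0∞ := fun k => (4:ℝ≥0∞) ^ (k:ℝ) * a k ^ β with hbdef
  have h4ne0 : (4:ℝ≥0∞) ≠ 0 := by norm_num
  have h4netop : (4:ℝ≥0∞) ≠ ⊤ := by norm_num
  have h4pow_netop : ∀ y : ℝ, (4:ℝ≥0∞) ^ y ≠ ⊤ := by
    intro y
    simp [ENNReal.rpow_eq_top_iff]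
  have hafin : ∀ k, a k ≠ ⊤ := fun k => ne_top_of_le_ne_top hM (haM k)
  have hbfin : ∀ k, b k ≠ ⊤ := by
    intro k
    exact ENNReal.mul_ne_top (h4pow_netop _)
      (ENNReal.rpow_lt_top_of_nonneg hβ0.le (hafin k)).ne
  -- the basic dichotomy estimate
  have hstep : ∀ k : ℤ, b k ≤
      ENNReal.ofReal (4 * ε ^ (-θ)) * ((4:ℝ≥0∞) ^ (((k-1:ℤ)):ℝ) * a k * a (k-1) ^ (-θ))
        + ENNReal.ofReal (1/2) * b (k-1) := by
    intro k
    have hcast : (((k-1:ℤ)):ℝ) = (k:ℝ) - 1 := by push_cast; ring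
    have h4split : (4:ℝ≥0∞) ^ (k:ℝ) = 4 * (4:ℝ≥0∞) ^ ((k:ℝ) - 1) := by
      have h := ENNReal.rpow_add 1 ((k:ℝ)-1) h4ne0 h4netop
      rw [ENNReal.rpow_one] at h
      rw [show (1:ℝ) + ((k:ℝ)-1) = (k:ℝ) by ring] at h
      exact h
    rcases eq_or_ne (a k) 0 with h0 | h0
    · have : b k = 0 := by
        simp [hbdef, h0, ENNReal.zero_rpow_of_pos hβ0]
      rw [this]; exact zero_le
    have hak1_0 : a (k-1) ≠ 0 := by
      intro h
      exact h0 (le_antisymm (le_trans (hmono (by omega)) h.le) zero_le)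
    have hfin : a k ≠ ⊤ := hafin k
    have hfin1 : a (k-1) ≠ ⊤ := hafin (k-1)
    by_cases hc : ENNReal.ofReal ε * a (k-1) ≤ a k
    · -- "dense" case
      have h1 : a k ^ (-θ) ≤ ENNReal.ofReal (ε ^ (-θ)) * a (k-1) ^ (-θ) := by
        have hmul : (ENNReal.ofReal ε * a (k-1)) ^ (-θ)
            = ENNReal.ofReal ε ^ (-θ) * a (k-1) ^ (-θ) :=
          ENNReal.mul_rpow_of_ne_zero (by simp [hε0.le, hε0]) hak1_0 _
        have hmono' : a k ^ (-θ) ≤ (ENNReal.ofReal ε * a (k-1)) ^ (-θ) := by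
          rw [ENNReal.rpow_neg, ENNReal.rpow_neg]
          exact ENNReal.inv_le_inv.mpr (ENNReal.rpow_le_rpow hc hθ0.le)
        rw [ENNReal.ofReal_rpow_of_pos hε0] at hmul
        exact le_trans hmono' (le_of_eq hmul)
      have hbk : b k = (4:ℝ≥0∞) ^ (k:ℝ) * (a k * a k ^ (-θ)) := by
        have hplus : a k ^ β = a k * a k ^ (-θ) := by
          rw [show β = 1 + (-θ) by rw [hβdef]; ring, ENNReal.rpow_add _ _ h0 hfin,
            ENNReal.rpow_one]
        simp only [hbdef]
        rw [hplus]
      refine le_trans ?_ le_self_add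
      rw [hbk]
      calc (4:ℝ≥0∞) ^ (k:ℝ) * (a k * a k ^ (-θ))
          ≤ (4:ℝ≥0∞) ^ (k:ℝ) * (a k * (ENNReal.ofReal (ε ^ (-θ)) * a (k-1) ^ (-θ))) :=
            mul_le_mul_right (mul_le_mul_right h1 _) _
        _ = ENNReal.ofReal (4 * ε ^ (-θ)) *
              ((4:ℝ≥0∞) ^ (((k-1:ℤ)):ℝ) * a k * a (k-1) ^ (-θ)) := by
            rw [hcast, h4split, ENNReal.ofReal_mul (by norm_num : (0:ℝ) ≤ 4),
              ENNReal.ofReal_ofNat]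
            ring
    · -- "sparse" case
      push_neg at hc
      have h2 : a k ^ β ≤ ENNReal.ofReal (1/8) * a (k-1) ^ β := by
        have h3 : a k ^ β ≤ (ENNReal.ofReal ε * a (k-1)) ^ β :=
          ENNReal.rpow_le_rpow hc.le hβ0.le
        rw [ENNReal.mul_rpow_of_nonneg _ _ hβ0.le, ENNReal.ofReal_rpow_of_pos hε0, hεβ]
          at h3
        exact h3
      have h418 : (4:ℝ≥0∞) * ENNReal.ofReal (1/8) = ENNReal.ofReal (1/2) := by
        rw [show (4:ℝ≥0∞) = ENNReal.ofReal 4 by simp,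
          ← ENNReal.ofReal_mul (by norm_num : (0:ℝ) ≤ 4)]
        norm_num
      refine le_trans ?_ le_add_self
      calc b k = (4:ℝ≥0∞) ^ (k:ℝ) * a k ^ β := rfl
        _ ≤ (4:ℝ≥0∞) ^ (k:ℝ) * (ENNReal.ofReal (1/8) * a (k-1) ^ β) :=
            mul_le_mul_right h2 _
        _ = ENNReal.ofReal (1/2) * b (k-1) := by
            simp only [hbdef]
            rw [hcast, h4split, ← h418]
            ring
  -- partial-sum absorption
  have hpart : ∀ N : ℕ, ∑ k ∈ Finset.Icc (-(N:ℤ)) (N:ℤ), b k ≤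
      2 * ((4:ℝ≥0∞) ^ (-(N:ℝ)) * M ^ β) + 2 * (ENNReal.ofReal (4 * ε ^ (-θ)) * R) := by
    intro N
    set P := ∑ k ∈ Finset.Icc (-(N:ℤ)) (N:ℤ), b k with hPdef
    have hPfin : P ≠ ⊤ := by
      rw [hPdef]
      exact (ENNReal.sum_lt_top.mpr (fun k _ => (hbfin k).lt_top)).ne
    have hsplit : Finset.Icc (-(N:ℤ)) (N:ℤ)
        = insert (-(N:ℤ)) (Finset.Icc (-(N:ℤ)+1) (N:ℤ)) := by
      ext k; simp only [Finset.mem_Icc, Finset.mem_insert]; omega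
    have hnotmem : (-(N:ℤ)) ∉ Finset.Icc (-(N:ℤ)+1) (N:ℤ) := by
      simp only [Finset.mem_Icc]; omega
    have hmapIcc : Finset.Icc (-(N:ℤ)+1) (N:ℤ)
        = Finset.map (addRightEmbedding 1) (Finset.Icc (-(N:ℤ)) ((N:ℤ)-1)) := by
      rw [Finset.map_add_right_Icc]
      congr 1
      omega
    have hsum1 : ∑ k ∈ Finset.Icc (-(N:ℤ)+1) (N:ℤ),
        ((4:ℝ≥0∞) ^ (((k-1:ℤ)):ℝ) * a k * a (k-1) ^ (-θ)) ≤ R := by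
      rw [hmapIcc, Finset.sum_map]
      simp only [addRightEmbedding_apply, add_sub_cancel_right]
      exact ENNReal.sum_le_tsum _
    have hsum2 : ∑ k ∈ Finset.Icc (-(N:ℤ)+1) (N:ℤ), b (k-1) ≤ P := by
      rw [hmapIcc, Finset.sum_map]
      simp only [addRightEmbedding_apply, add_sub_cancel_right]
      exact Finset.sum_le_sum_of_subset
        (by intro j hj; simp only [Finset.mem_Icc] at hj ⊢; omega)
    have hstep2 : ∑ k ∈ Finset.Icc (-(N:ℤ)+1) (N:ℤ), b k ≤
        ENNReal.ofReal (4 * ε ^ (-θ)) * R + ENNReal.ofReal (1/2) * P := by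
      calc ∑ k ∈ Finset.Icc (-(N:ℤ)+1) (N:ℤ), b k
          ≤ ∑ k ∈ Finset.Icc (-(N:ℤ)+1) (N:ℤ),
              (ENNReal.ofReal (4 * ε ^ (-θ)) *
                ((4:ℝ≥0∞) ^ (((k-1:ℤ)):ℝ) * a k * a (k-1) ^ (-θ))
               + ENNReal.ofReal (1/2) * b (k-1)) :=
            Finset.sum_le_sum (fun k _ => hstep k)
        _ = ENNReal.ofReal (4 * ε ^ (-θ)) *
              ∑ k ∈ Finset.Icc (-(N:ℤ)+1) (N:ℤ),
                ((4:ℝ≥0∞) ^ (((k-1:ℤ)):ℝ) * a k * a (k-1) ^ (-θ))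
            + ENNReal.ofReal (1/2) * ∑ k ∈ Finset.Icc (-(N:ℤ)+1) (N:ℤ), b (k-1) := by
            rw [Finset.sum_add_distrib, Finset.mul_sum, Finset.mul_sum]
        _ ≤ ENNReal.ofReal (4 * ε ^ (-θ)) * R + ENNReal.ofReal (1/2) * P :=
            add_le_add (mul_le_mul_right hsum1 _) (mul_le_mul_right hsum2 _)
    have hP0 : P = b (-(N:ℤ)) + ∑ k ∈ Finset.Icc (-(N:ℤ)+1) (N:ℤ), b k := by
      rw [hPdef, hsplit, Finset.sum_insert hnotmem]
    have hP2 : P ≤ b (-(N:ℤ)) + (ENNReal.ofReal (4 * ε ^ (-θ)) * R + ENNReal.ofReal (1/2) * P) := by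
      calc P = b (-(N:ℤ)) + ∑ k ∈ Finset.Icc (-(N:ℤ)+1) (N:ℤ), b k := hP0
        _ ≤ _ := add_le_add_right hstep2 _
    have hhalf : ENNReal.ofReal (1/2) * P = P / 2 := by
      rw [show ENNReal.ofReal (1/2:ℝ) = 2⁻¹ by
        rw [one_div, ENNReal.ofReal_inv_of_pos (by norm_num : (0:ℝ) < 2),
          ENNReal.ofReal_ofNat]]
      rw [div_eq_mul_inv, mul_comm]
    have hPle : P ≤ 2 * (b (-(N:ℤ)) + ENNReal.ofReal (4 * ε ^ (-θ)) * R) := by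
      rw [hhalf, ← add_assoc] at hP2
      have h3 : P / 2 + P / 2 ≤ (b (-(N:ℤ)) + ENNReal.ofReal (4 * ε ^ (-θ)) * R) + P / 2 := by
        rw [ENNReal.add_halves]; exact hP2
      have h4 : P / 2 ≤ b (-(N:ℤ)) + ENNReal.ofReal (4 * ε ^ (-θ)) * R :=
        (ENNReal.add_le_add_iff_right (ENNReal.div_lt_top hPfin (by norm_num)).ne).mp h3
      calc P = P / 2 + P / 2 := (ENNReal.add_halves P).symm
        _ ≤ (b (-(N:ℤ)) + ENNReal.ofReal (4 * ε ^ (-θ)) * R)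
            + (b (-(N:ℤ)) + ENNReal.ofReal (4 * ε ^ (-θ)) * R) := add_le_add h4 h4
        _ = 2 * (b (-(N:ℤ)) + ENNReal.ofReal (4 * ε ^ (-θ)) * R) := (two_mul _).symm
    have hbN : b (-(N:ℤ)) ≤ (4:ℝ≥0∞) ^ (-(N:ℝ)) * M ^ β := by
      simp only [hbdef, Int.cast_neg, Int.cast_natCast]
      exact mul_le_mul_right (ENNReal.rpow_le_rpow (haM _) hβ0.le) _
    calc P ≤ 2 * (b (-(N:ℤ)) + ENNReal.ofReal (4 * ε ^ (-θ)) * R) := hPle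
      _ ≤ 2 * ((4:ℝ≥0∞) ^ (-(N:ℝ)) * M ^ β + ENNReal.ofReal (4 * ε ^ (-θ)) * R) :=
          mul_le_mul_right (add_le_add_left hbN _) _
      _ = 2 * ((4:ℝ≥0∞) ^ (-(N:ℝ)) * M ^ β) + 2 * (ENNReal.ofReal (4 * ε ^ (-θ)) * R) := by
          rw [mul_add]
  -- pass to the limit
  have h8 : ENNReal.ofReal (8 * ε ^ (-θ)) = 2 * ENNReal.ofReal (4 * ε ^ (-θ)) := by
    rw [show (8:ℝ) * ε ^ (-θ) = 2 * (4 * ε ^ (-θ)) by ring,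
      ENNReal.ofReal_mul (by norm_num : (0:ℝ) ≤ 2), ENNReal.ofReal_ofNat]
  have hS : ∑' k : ℤ, b k ≤ ENNReal.ofReal (8 * ε ^ (-θ)) * R := by
    rw [ENNReal.tsum_eq_iSup_sum]
    apply iSup_le
    intro F
    set N₀ : ℕ := F.sup (fun i => i.natAbs) with hN₀def
    have hsub : ∀ N : ℕ, N₀ ≤ N → F ⊆ Finset.Icc (-(N:ℤ)) (N:ℤ) := by
      intro N hN i hi
      have h1 : i.natAbs ≤ N₀ := by
        simpa using Finset.le_sup (f := fun i : ℤ => i.natAbs) hi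
      simp only [Finset.mem_Icc]
      omega
    have hFle : ∀ N : ℕ, N₀ ≤ N → ∑ k ∈ F, b k ≤
        2 * ((4:ℝ≥0∞) ^ (-(N:ℝ)) * M ^ β) + 2 * (ENNReal.ofReal (4 * ε ^ (-θ)) * R) :=
      fun N hN => le_trans (Finset.sum_le_sum_of_subset (hsub N hN)) (hpart N)
    have hMβfin : M ^ β ≠ ⊤ := (ENNReal.rpow_lt_top_of_nonneg hβ0.le hM).ne
    have htend : Tendsto (fun N : ℕ => 2 * ((4:ℝ≥0∞) ^ (-(N:ℝ)) * M ^ β)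
        + 2 * (ENNReal.ofReal (4 * ε ^ (-θ)) * R)) atTop
        (𝓝 (2 * ((0:ℝ≥0∞) * M ^ β) + 2 * (ENNReal.ofReal (4 * ε ^ (-θ)) * R))) := by
      apply Filter.Tendsto.add _ tendsto_const_nhds
      apply ENNReal.Tendsto.const_mul _ (Or.inr (by norm_num))
      apply ENNReal.Tendsto.mul_const _ (Or.inr hMβfin)
      have heq : ∀ N : ℕ, (4:ℝ≥0∞) ^ (-(N:ℝ)) = ((4:ℝ≥0∞)⁻¹) ^ (N:ℕ) := by
        intro N
        rw [ENNReal.rpow_neg, ENNReal.rpow_natCast, ← ENNReal.inv_pow]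
      simp_rw [heq]
      exact ENNReal.tendsto_pow_atTop_nhds_zero_of_lt_one
        (by rw [ENNReal.inv_lt_one]; norm_num)
    have hlim : ∑ k ∈ F, b k ≤ 2 * ((0:ℝ≥0∞) * M ^ β) + 2 * (ENNReal.ofReal (4 * ε ^ (-θ)) * R) :=
      ge_of_tendsto htend (Filter.eventually_atTop.mpr ⟨N₀, hFle⟩)
    calc ∑ k ∈ F, b k ≤ 2 * ((0:ℝ≥0∞) * M ^ β) + 2 * (ENNReal.ofReal (4 * ε ^ (-θ)) * R) := hlim
      _ = 2 * (ENNReal.ofReal (4 * ε ^ (-θ)) * R) := by rw [zero_mul, mul_zero, zero_add]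
      _ = ENNReal.ofReal (8 * ε ^ (-θ)) * R := by rw [h8, mul_assoc]
  exact hS

end FracAux


/-- Fractional Sobolev inequality: for measurable compactly supported `f`,
`‖f‖²_{L^{2n/(n-2s)}} ≤ C(n,s) ∫∫ |f x - f y|² / |x-y|^{n+2s}`. -/
theorem fractional_sobolev_inequality (n : ℕ) (hn : 2 ≤ n) (s : ℝ) (hs : s ∈ Ioo (0:ℝ) 1) :
    ∃ C > (0:ℝ), ∀ f : EuclideanSpace ℝ (Fin n) → ℝ, Measurable f → HasCompactSupport f →
      (eLpNorm f (ENNReal.ofReal (2 * n / (n - 2 * s))) volume) ^ 2 ≤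
        ENNReal.ofReal C *
          ∫⁻ x, ∫⁻ y, ENNReal.ofReal (|f x - f y| ^ 2 / ‖x - y‖ ^ ((n : ℝ) + 2 * s)) := by
  obtain ⟨hs0, hs1⟩ := hs
  have hn2 : (2:ℝ) ≤ (n:ℝ) := by exact_mod_cast hn
  have hn0 : (0:ℝ) < n := by linarith
  have hns : 0 < (n:ℝ) - 2*s := by linarith
  have h4ne0 : (4:ℝ≥0∞) ≠ 0 := by norm_num
  have h4netop : (4:ℝ≥0∞) ≠ ⊤ := by norm_num
  set θ : ℝ := 2*s/(n:ℝ) with hθdef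
  have hθ0 : 0 < θ := by positivity
  have hθ1 : θ < 1 := by rw [hθdef, div_lt_one hn0]; linarith
  haveI : Nonempty (Fin n) := ⟨⟨0, by omega⟩⟩
  haveI : Nontrivial (EuclideanSpace ℝ (Fin n)) := by
    have h : (EuclideanSpace.single (⟨0, by omega⟩ : Fin n) (1:ℝ)) ≠ 0 := by
      intro h
      have h2 : (EuclideanSpace.single (⟨0, by omega⟩ : Fin n) (1:ℝ)) ⟨0, by omega⟩ = (0 : EuclideanSpace ℝ (Fin n)) ⟨0, by omega⟩ := by rw [h]
      rw [EuclideanSpace.single_apply] at h2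
      simp at h2
    exact nontrivial_of_ne _ _ h
  set ω : ℝ≥0∞ := volume (ball (0 : EuclideanSpace ℝ (Fin n)) 1) with hωdef
  have hω0 : ω ≠ 0 := (measure_ball_pos _ _ one_pos).ne'
  have hωtop : ω ≠ ⊤ := measure_ball_lt_top.ne
  set ωT : ℝ := ω.toReal with hωTdef
  have hωT : 0 < ωT := ENNReal.toReal_pos hω0 hωtop
  set c₃ : ℝ := ωT ^ ((1:ℝ)+θ) / 2 ^ ((n:ℝ) + 2*s + θ + 3) with hc₃def
  have hc₃ : 0 < c₃ := by positivity
  obtain ⟨C₀, hC₀, hkey⟩ := key_summation hθ0 hθ1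
  refine ⟨2*C₀/c₃, by positivity, ?_⟩
  intro f hf hsupp
  -- basic real exponents
  set q : ℝ := (n:ℝ)/((n:ℝ)-2*s) with hqdef
  have hq1 : 1 ≤ q := by rw [hqdef, le_div_iff₀ hns]; linarith
  have hq0 : (0:ℝ) < q := lt_of_lt_of_le one_pos hq1
  set preal : ℝ := 2 * (n:ℝ) / ((n:ℝ) - 2 * s) with hprealdef
  have hpreal0 : 0 < preal := by rw [hprealdef]; positivity
  have hp2q : preal = 2*q := by rw [hprealdef, hqdef]; ring
  have hβq : ((1:ℝ) - θ) * q = 1 := by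
    rw [hθdef, hqdef]; field_simp
  -- dyadic level sets
  set A : ℤ → Set (EuclideanSpace ℝ (Fin n)) := fun k => {x | (2:ℝ)^(k:ℝ) < |f x|} with hAdef
  set D : ℤ → Set (EuclideanSpace ℝ (Fin n)) :=
    fun k => {x | (2:ℝ)^(k:ℝ) < |f x| ∧ |f x| ≤ (2:ℝ)^((k:ℝ)+1)} with hDdef
  set a : ℤ → ℝ≥0∞ := fun k => volume (A k) with hadef
  have habs : Measurable fun x => |f x| := hf.abs
  have hAmeas : ∀ k : ℤ, MeasurableSet (A k) := fun k => measurableSet_lt measurable_const habs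
  have hDmeas : ∀ k : ℤ, MeasurableSet (D k) :=
    fun k => (measurableSet_lt measurable_const habs).inter (measurableSet_le habs measurable_const)
  have hAmono : ∀ j k : ℤ, j ≤ k → A k ⊆ A j := by
    intro j k hjk x hx
    simp only [hAdef, mem_setOf_eq] at hx ⊢
    have h1 : (2:ℝ)^((j:ℝ)) ≤ (2:ℝ)^((k:ℝ)) := by
      apply Real.rpow_le_rpow_of_exponent_le (by norm_num)
      exact_mod_cast hjk
    linarith
  have hamono : ∀ ⦃j k : ℤ⦄, j ≤ k → a k ≤ a j := fun j k hjk => measure_mono (hAmono j k hjk)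
  set M : ℝ≥0∞ := volume (tsupport f) with hMdef
  have hMtop : M ≠ ⊤ := (IsCompact.measure_lt_top hsupp).ne
  have haM : ∀ k, a k ≤ M := by
    intro k
    apply measure_mono
    intro x hx
    simp only [hAdef, mem_setOf_eq] at hx
    have : f x ≠ 0 := by
      intro h0
      rw [h0, abs_zero] at hx
      exact absurd hx (not_lt.mpr (Real.rpow_nonneg (by norm_num) _))
    exact subset_tsupport f this
  have hafin : ∀ k, a k ≠ ⊤ := fun k => ne_top_of_le_ne_top hMtop (haM k)
  -- dyadic covering
  have hcover : ∀ t : ℝ, 0 < t → ∃ k : ℤ, (2:ℝ)^(k:ℝ) < t ∧ t ≤ (2:ℝ)^((k:ℝ)+1) := by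
    intro t ht
    refine ⟨⌈Real.logb 2 t⌉ - 1, ?_, ?_⟩
    · have h1 : ((⌈Real.logb 2 t⌉ - 1 : ℤ):ℝ) < Real.logb 2 t := by
        push_cast
        have := Int.ceil_lt_add_one (Real.logb 2 t)
        linarith
      have h2 := (Real.rpow_lt_rpow_left_iff (by norm_num : (1:ℝ) < 2)).mpr h1
      rwa [Real.rpow_logb (by norm_num) (by norm_num) ht] at h2
    · have h1 : Real.logb 2 t ≤ ((⌈Real.logb 2 t⌉ - 1 : ℤ):ℝ) + 1 := by
        push_cast
        have := Int.le_ceil (Real.logb 2 t)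
        linarith
      have h2 := (Real.rpow_le_rpow_left_iff (by norm_num : (1:ℝ) < 2)).mpr h1
      rwa [Real.rpow_logb (by norm_num) (by norm_num) ht] at h2
  have hDdisj : Pairwise (Function.onFun Disjoint D) := by
    intro j k hjk
    wlog h : j < k generalizing j k
    · exact (this hjk.symm (by omega)).symm
    rw [Function.onFun, Set.disjoint_left]
    intro x hxj hxk
    simp only [hDdef, mem_setOf_eq] at hxj hxk
    have h3 : (j:ℝ)+1 ≤ (k:ℝ) := by
      have : (j+1 : ℤ) ≤ k := by omega
      exact_mod_cast this
    have h4 : (2:ℝ)^((j:ℝ)+1) ≤ (2:ℝ)^((k:ℝ)) :=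
      Real.rpow_le_rpow_of_exponent_le (by norm_num) h3
    linarith [hxj.2, hxk.1]
  have hAUnion : ∀ k : ℤ, A k = ⋃ m : ℕ, D (k+m) := by
    intro k
    ext x
    simp only [hAdef, hDdef, mem_setOf_eq, mem_iUnion]
    constructor
    · intro hx
      have ht : 0 < |f x| := lt_trans (Real.rpow_pos_of_pos (by norm_num) _) hx
      obtain ⟨j, hj1, hj2⟩ := hcover _ ht
      have hkj : k ≤ j := by
        by_contra hlt
        push_neg at hlt
        have h3 : (j:ℝ)+1 ≤ (k:ℝ) := by
          have : (j+1 : ℤ) ≤ k := by omega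
          exact_mod_cast this
        have h4 : (2:ℝ)^((j:ℝ)+1) ≤ (2:ℝ)^((k:ℝ)) :=
          Real.rpow_le_rpow_of_exponent_le (by norm_num) h3
        linarith
      refine ⟨(j - k).toNat, ?_⟩
      rw [show (k + ((j - k).toNat : ℤ)) = j by omega]
      exact ⟨hj1, hj2⟩
    · rintro ⟨m, hm1, hm2⟩
      have h1 : (2:ℝ)^((k:ℝ)) ≤ (2:ℝ)^(((k+(m:ℤ)):ℤ):ℝ) := by
        apply Real.rpow_le_rpow_of_exponent_le (by norm_num)
        push_cast
        linarith [Nat.cast_nonneg (α := ℝ) m]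
      exact lt_of_le_of_lt h1 hm1
  have haSum : ∀ k : ℤ, a k = ∑' m : ℕ, volume (D (k+m)) := by
    intro k
    have : a k = volume (A k) := rfl
    rw [this, hAUnion k]
    exact measure_iUnion
      (fun m m' hmm => hDdisj (show (k+(m:ℤ)) ≠ (k+(m':ℤ)) by omega))
      (fun m => hDmeas _)
  have hUeq : (⋃ k : ℤ, D k) = {x | f x ≠ 0} := by
    ext x
    simp only [mem_iUnion, hDdef, mem_setOf_eq]
    constructor
    · rintro ⟨k, hk1, hk2⟩
      intro h0
      rw [h0, abs_zero] at hk1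
      exact absurd hk1 (not_lt.mpr (Real.rpow_nonneg (by norm_num) _))
    · intro h0
      exact hcover |f x| (abs_pos.mpr h0)
  -- Step A : layer cake estimate
  have h2E : ∀ y:ℝ, (2:ℝ≥0∞)^y = ENNReal.ofReal (2^y) := by
    intro y
    rw [← ENNReal.ofReal_rpow_of_pos (by norm_num : (0:ℝ) < 2), ENNReal.ofReal_ofNat]
  have hI : ∫⁻ x, (‖f x‖₊ : ℝ≥0∞) ^ preal ≤
      ENNReal.ofReal (2 ^ preal) * ∑' k : ℤ, (2:ℝ≥0∞) ^ ((k:ℝ) * preal) * a k := by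
    have hUmeas : MeasurableSet (⋃ k : ℤ, D k) := MeasurableSet.iUnion (fun k => hDmeas k)
    have hDk : ∀ k : ℤ, ∫⁻ x in D k, (‖f x‖₊ : ℝ≥0∞) ^ preal ≤
        ENNReal.ofReal (2 ^ preal) * ((2:ℝ≥0∞) ^ ((k:ℝ)*preal) * a k) := by
      intro k
      have hpt : ∀ x ∈ D k, (‖f x‖₊ : ℝ≥0∞) ^ preal ≤
          ENNReal.ofReal (2^preal) * (2:ℝ≥0∞) ^ ((k:ℝ)*preal) := by
        intro x hx
        simp only [hDdef, mem_setOf_eq] at hx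
        have h1 : (‖f x‖₊ : ℝ≥0∞) = ENNReal.ofReal |f x| := Real.enorm_eq_ofReal_abs _
        have h2 : (‖f x‖₊ : ℝ≥0∞) ^ preal ≤ (ENNReal.ofReal ((2:ℝ)^((k:ℝ)+1))) ^ preal := by
          rw [h1]
          exact ENNReal.rpow_le_rpow (ENNReal.ofReal_le_ofReal hx.2) hpreal0.le
        refine h2.trans (le_of_eq ?_)
        rw [ENNReal.ofReal_rpow_of_pos (Real.rpow_pos_of_pos (by norm_num) _)]
        rw [← Real.rpow_mul (by norm_num : (0:ℝ) ≤ 2)]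
        rw [show ((k:ℝ)+1) * preal = preal + (k:ℝ)*preal by ring]
        rw [Real.rpow_add (by norm_num : (0:ℝ) < 2)]
        rw [ENNReal.ofReal_mul (Real.rpow_nonneg (by norm_num) _)]
        rw [h2E ((k:ℝ)*preal)]
      calc ∫⁻ x in D k, (‖f x‖₊ : ℝ≥0∞) ^ preal
          ≤ ∫⁻ _ in D k, ENNReal.ofReal (2^preal) * (2:ℝ≥0∞) ^ ((k:ℝ)*preal) :=
            lintegral_mono_ae ((ae_restrict_iff' (hDmeas k)).2 (ae_of_all _ hpt))
        _ = ENNReal.ofReal (2^preal) * (2:ℝ≥0∞) ^ ((k:ℝ)*preal) * volume (D k) :=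
            setLIntegral_const _ _
        _ ≤ ENNReal.ofReal (2^preal) * ((2:ℝ≥0∞) ^ ((k:ℝ)*preal) * a k) := by
            rw [mul_assoc]
            exact mul_le_mul_right (mul_le_mul_right (measure_mono (fun x hx => hx.1)) _) _
    have hcompl : ∫⁻ x in (⋃ k : ℤ, D k)ᶜ, (‖f x‖₊ : ℝ≥0∞) ^ preal = 0 := by
      have h0 : ∀ x ∈ (⋃ k : ℤ, D k)ᶜ, (‖f x‖₊ : ℝ≥0∞) ^ preal ≤ 0 := by
        intro x hx
        rw [hUeq] at hx
        simp only [mem_compl_iff, mem_setOf_eq, not_not] at hx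
        rw [hx]
        simp only [nnnorm_zero, ENNReal.coe_zero]
        rw [ENNReal.zero_rpow_of_pos hpreal0]
      refine le_antisymm ?_ zero_le
      calc ∫⁻ x in (⋃ k : ℤ, D k)ᶜ, (‖f x‖₊ : ℝ≥0∞) ^ preal
          ≤ ∫⁻ _ in (⋃ k : ℤ, D k)ᶜ, 0 :=
            lintegral_mono_ae ((ae_restrict_iff' hUmeas.compl).2 (ae_of_all _ h0))
        _ = 0 := lintegral_zero
    calc ∫⁻ x, (‖f x‖₊ : ℝ≥0∞) ^ preal
        = (∫⁻ x in (⋃ k : ℤ, D k), (‖f x‖₊ : ℝ≥0∞) ^ preal)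
          + ∫⁻ x in (⋃ k : ℤ, D k)ᶜ, (‖f x‖₊ : ℝ≥0∞) ^ preal :=
          (lintegral_add_compl _ hUmeas).symm
      _ = ∫⁻ x in (⋃ k : ℤ, D k), (‖f x‖₊ : ℝ≥0∞) ^ preal := by rw [hcompl, add_zero]
      _ = ∑' k : ℤ, ∫⁻ x in D k, (‖f x‖₊ : ℝ≥0∞) ^ preal := lintegral_iUnion hDmeas hDdisj _
      _ ≤ ∑' k : ℤ, ENNReal.ofReal (2 ^ preal) * ((2:ℝ≥0∞) ^ ((k:ℝ)*preal) * a k) :=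
          ENNReal.tsum_le_tsum hDk
      _ = ENNReal.ofReal (2 ^ preal) * ∑' k : ℤ, (2:ℝ≥0∞) ^ ((k:ℝ)*preal) * a k :=
          ENNReal.tsum_mul_left
  -- combine into the S-sum
  set S := ∑' k : ℤ, (4:ℝ≥0∞) ^ (k:ℝ) * a k ^ ((1:ℝ)-θ) with hSdef
  have hxq : ∀ k : ℤ, (2:ℝ≥0∞) ^ ((k:ℝ)*preal) * a k
      = ((4:ℝ≥0∞) ^ (k:ℝ) * a k ^ ((1:ℝ)-θ)) ^ q := by
    intro k
    rw [ENNReal.mul_rpow_of_nonneg _ _ hq0.le]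
    have h42 : (4:ℝ≥0∞) = (2:ℝ≥0∞) ^ (2:ℝ) := by
      rw [show (2:ℝ) = ((2:ℕ):ℝ) by norm_num, ENNReal.rpow_natCast]
      norm_num
    congr 1
    · rw [h42, ← ENNReal.rpow_mul, ← ENNReal.rpow_mul]
      congr 1
      rw [hp2q]; ring
    · rw [← ENNReal.rpow_mul, hβq, ENNReal.rpow_one]
  have hLHS : eLpNorm f (ENNReal.ofReal preal) volume ^ 2 ≤ 4 * S := by
    have hp0' : (ENNReal.ofReal preal) ≠ 0 := (ENNReal.ofReal_pos.mpr hpreal0).ne'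
    have hptop' : (ENNReal.ofReal preal) ≠ ⊤ := ENNReal.ofReal_ne_top
    rw [eLpNorm_eq_lintegral_rpow_enorm_toReal hp0' hptop', ENNReal.toReal_ofReal hpreal0.le]; simp only [enorm_eq_nnnorm]
    have h2 : ((∫⁻ x, (‖f x‖₊:ℝ≥0∞) ^ preal) ^ (1/preal)) ^ (2:ℕ)
        = (∫⁻ x, (‖f x‖₊:ℝ≥0∞) ^ preal) ^ (1/q) := by
      rw [← ENNReal.rpow_natCast ((∫⁻ x, (‖f x‖₊:ℝ≥0∞) ^ preal) ^ (1/preal)) 2,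
        ← ENNReal.rpow_mul]
      congr 1
      rw [hp2q]
      push_cast
      field_simp
    rw [h2]
    calc (∫⁻ x, (‖f x‖₊:ℝ≥0∞) ^ preal) ^ (1/q)
        ≤ (ENNReal.ofReal (2^preal) * S ^ q) ^ (1/q) := by
          apply ENNReal.rpow_le_rpow _ (by positivity)
          refine hI.trans ?_
          apply mul_le_mul_right
          calc ∑' k : ℤ, (2:ℝ≥0∞) ^ ((k:ℝ) * preal) * a k
              = ∑' k : ℤ, ((4:ℝ≥0∞) ^ (k:ℝ) * a k ^ ((1:ℝ)-θ)) ^ q := tsum_congr hxq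
            _ ≤ S ^ q := tsum_rpow_le_rpow_tsum _ hq1
      _ = (ENNReal.ofReal (2^preal)) ^ (1/q) * S := by
          rw [ENNReal.mul_rpow_of_nonneg _ _ (by positivity), ← ENNReal.rpow_mul]
          rw [show q * (1/q) = 1 by field_simp, ENNReal.rpow_one]
      _ ≤ 4 * S := by
          apply mul_le_mul_left
          rw [ENNReal.ofReal_rpow_of_pos (Real.rpow_pos_of_pos (by norm_num) _)]
          rw [← Real.rpow_mul (by norm_num : (0:ℝ) ≤ 2)]
          rw [show preal * (1/q) = 2 by rw [hp2q]; field_simp]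
          have h24 : (2:ℝ)^(2:ℝ) = 4 := by
            rw [show (2:ℝ) = ((2:ℕ):ℝ) by norm_num, Real.rpow_natCast]
            norm_num
          rw [h24, ENNReal.ofReal_ofNat]
  -- Step R: compare R with the disjointified sum T
  set R := ∑' k : ℤ, (4:ℝ≥0∞) ^ (k:ℝ) * a (k+1) * a k ^ (-θ) with hRdef
  set T := ∑' k : ℤ, (4:ℝ≥0∞) ^ (k:ℝ) * a k ^ (-θ) * volume (D (k+1)) with hTdef
  have hSR : S ≤ ENNReal.ofReal C₀ * R := hkey a M hMtop haM hamono
  have hnegmono : ∀ ⦃j k : ℤ⦄, j ≤ k → a j ^ (-θ) ≤ a k ^ (-θ) := by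
    intro j k hjk
    rw [ENNReal.rpow_neg, ENNReal.rpow_neg]
    exact ENNReal.inv_le_inv.mpr (ENNReal.rpow_le_rpow (hamono hjk) hθ0.le)
  have hRT : R ≤ 2 * T := by
    have hterm : ∀ k : ℤ, (4:ℝ≥0∞) ^ (k:ℝ) * a (k+1) * a k ^ (-θ)
        ≤ ∑' m : ℕ, (4:ℝ≥0∞) ^ (k:ℝ) * volume (D (k+1+m)) * a (k+m) ^ (-θ) := by
      intro k
      have h1 : (4:ℝ≥0∞) ^ (k:ℝ) * a (k+1) * a k ^ (-θ)
          = ∑' m : ℕ, (4:ℝ≥0∞) ^ (k:ℝ) * volume (D (k+1+m)) * a k ^ (-θ) := by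
        rw [haSum (k+1), ← ENNReal.tsum_mul_left, ← ENNReal.tsum_mul_right]
      rw [h1]
      refine ENNReal.tsum_le_tsum (fun m => ?_)
      exact mul_le_mul_right (hnegmono (by omega : k ≤ k + (m:ℤ))) _
    have hshift : ∀ m : ℕ, (∑' k : ℤ, (4:ℝ≥0∞) ^ (k:ℝ) * volume (D (k+1+m)) * a (k+m) ^ (-θ))
        = (4:ℝ≥0∞) ^ (-(m:ℝ)) * T := by
      intro m
      have hone : ((4:ℝ≥0∞) ^ ((m:ℝ)))⁻¹ * (4:ℝ≥0∞) ^ ((m:ℝ)) = 1 :=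
        ENNReal.inv_mul_cancel (by simp [ENNReal.rpow_eq_zero_iff]) (by simp [ENNReal.rpow_eq_top_iff])
      have h1 : ∀ k : ℤ, (4:ℝ≥0∞) ^ (k:ℝ) * volume (D (k+1+m)) * a (k+m) ^ (-θ)
          = (4:ℝ≥0∞) ^ (-(m:ℝ)) *
            ((4:ℝ≥0∞) ^ (((k+(m:ℤ)):ℤ):ℝ) * a (k+(m:ℤ)) ^ (-θ) * volume (D ((k+(m:ℤ))+1))) := by
        intro k
        rw [show (k+1+(m:ℤ) : ℤ) = (k+(m:ℤ))+1 by omega]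
        rw [show (((k+(m:ℤ)):ℤ):ℝ) = (k:ℝ) + (m:ℝ) by push_cast; ring]
        rw [ENNReal.rpow_add _ _ h4ne0 h4netop, ENNReal.rpow_neg 4 ((m:ℝ))]
        calc (4:ℝ≥0∞) ^ (k:ℝ) * volume (D ((k+(m:ℤ))+1)) * a (k+(m:ℤ)) ^ (-θ)
            = (((4:ℝ≥0∞) ^ ((m:ℝ)))⁻¹ * (4:ℝ≥0∞) ^ ((m:ℝ))) *
              ((4:ℝ≥0∞) ^ (k:ℝ) * a (k+(m:ℤ)) ^ (-θ) * volume (D ((k+(m:ℤ))+1))) := by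
              rw [hone, one_mul]; ring
          _ = ((4:ℝ≥0∞) ^ ((m:ℝ)))⁻¹ *
              ((4:ℝ≥0∞) ^ (k:ℝ) * (4:ℝ≥0∞) ^ ((m:ℝ)) * a (k+(m:ℤ)) ^ (-θ) * volume (D ((k+(m:ℤ))+1))) := by
              ring
      rw [tsum_congr h1, ENNReal.tsum_mul_left]
      congr 1
      exact (Equiv.addRight (m:ℤ)).tsum_eq
        (fun j => (4:ℝ≥0∞) ^ ((j:ℤ):ℝ) * a j ^ (-θ) * volume (D (j+1)))
    have hgeom : (∑' m : ℕ, (4:ℝ≥0∞) ^ (-(m:ℝ))) ≤ 2 := by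
      have h1 : ∀ m : ℕ, (4:ℝ≥0∞) ^ (-(m:ℝ)) ≤ ((2:ℝ≥0∞)⁻¹) ^ (m:ℕ) := by
        intro m
        rw [ENNReal.rpow_neg, ENNReal.rpow_natCast, ENNReal.inv_pow]
        exact pow_le_pow_left' (ENNReal.inv_le_inv.mpr (by norm_num : (2:ℝ≥0∞) ≤ 4)) m
      calc (∑' m : ℕ, (4:ℝ≥0∞) ^ (-(m:ℝ))) ≤ ∑' m : ℕ, ((2:ℝ≥0∞)⁻¹) ^ (m:ℕ) :=
            ENNReal.tsum_le_tsum h1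
        _ = (1 - 2⁻¹)⁻¹ := ENNReal.tsum_geometric _
        _ = 2 := by rw [ENNReal.one_sub_inv_two, inv_inv]
    calc R ≤ ∑' k : ℤ, ∑' m : ℕ, (4:ℝ≥0∞) ^ (k:ℝ) * volume (D (k+1+m)) * a (k+m) ^ (-θ) :=
          ENNReal.tsum_le_tsum hterm
      _ = ∑' m : ℕ, ∑' k : ℤ, (4:ℝ≥0∞) ^ (k:ℝ) * volume (D (k+1+m)) * a (k+m) ^ (-θ) :=
          ENNReal.tsum_comm
      _ = ∑' m : ℕ, (4:ℝ≥0∞) ^ (-(m:ℝ)) * T := tsum_congr hshift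
      _ = (∑' m : ℕ, (4:ℝ≥0∞) ^ (-(m:ℝ))) * T := ENNReal.tsum_mul_right
      _ ≤ 2 * T := mul_le_mul_left hgeom _
  -- Step B : lower bound for the Gagliardo energy
  have hDsubA1 : ∀ k : ℤ, D k ⊆ A (k-1) := by
    intro k
    refine subset_trans (fun x hx => hx.1) (hAmono (k-1) k (by omega))
  have hBk : ∀ k : ℤ, ENNReal.ofReal c₃ * ((4:ℝ≥0∞) ^ (k:ℝ) * a (k-1) ^ (-θ) * volume (D k)) ≤
      ∫⁻ x in D k, (∫⁻ y, ENNReal.ofReal (|f x - f y| ^ 2 / ‖x - y‖ ^ ((n:ℝ) + 2*s))) := by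
    intro k
    rcases eq_or_ne (a (k-1)) 0 with h0 | h0
    · have hD0 : volume (D k) = 0 :=
        le_antisymm (h0 ▸ measure_mono (hDsubA1 k)) zero_le
      rw [hD0, mul_zero, mul_zero]
      exact zero_le
    · have hafin1 : a (k-1) ≠ ⊤ := hafin _
      set aT : ℝ := (a (k-1)).toReal with haTdef
      have haT0 : 0 < aT := ENNReal.toReal_pos h0 hafin1
      have hbase0 : 0 < 2*aT/ωT := by positivity
      set r : ℝ := (2*aT/ωT) ^ (1/(n:ℝ)) with hrdef
      have hr0 : 0 < r := Real.rpow_pos_of_pos hbase0 _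
      have hrn : ENNReal.ofReal (r ^ (n:ℕ)) * ω = 2 * a (k-1) := by
        have h1 : r ^ (n:ℕ) = 2*aT/ωT := by
          rw [hrdef, ← Real.rpow_natCast ((2*aT/ωT) ^ (1/(n:ℝ))) n, ← Real.rpow_mul hbase0.le]
          rw [show 1/(n:ℝ) * ((n:ℕ):ℝ) = 1 by field_simp]
          exact Real.rpow_one _
        have h2 : ω = ENNReal.ofReal ωT := by
          rw [hωTdef, ENNReal.ofReal_toReal hωtop]
        rw [h1, h2, ← ENNReal.ofReal_mul (by positivity)]
        rw [show 2*aT/ωT * ωT = 2*aT by field_simp]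
        rw [ENNReal.ofReal_mul (by norm_num : (0:ℝ) ≤ 2), ENNReal.ofReal_ofNat,
          haTdef, ENNReal.ofReal_toReal hafin1]
      have hball1 : ∀ x : EuclideanSpace ℝ (Fin n), volume (ball x r) = 2 * a (k-1) := by
        intro x
        rw [Measure.addHaar_ball volume x hr0.le, finrank_euclideanSpace_fin, ← hωdef, hrn]
      have hball2 : ∀ x : EuclideanSpace ℝ (Fin n),
          volume (ball x (2*r)) = 2^(n:ℕ) * (2 * a (k-1)) := by
        intro x
        rw [Measure.addHaar_ball volume x (by positivity : (0:ℝ) ≤ 2*r),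
          finrank_euclideanSpace_fin, ← hωdef]
        rw [mul_pow, ENNReal.ofReal_mul (by positivity),
          ENNReal.ofReal_pow (by norm_num : (0:ℝ) ≤ 2), ENNReal.ofReal_ofNat,
          mul_assoc, hrn]
      -- real constant identity
      have hc₃k : c₃ * 4^(k:ℝ) * aT ^ (-θ) = (4:ℝ)^((k:ℝ)-1) / (2*r)^((n:ℝ)+2*s) * aT := by
        have e1 : (2*r)^((n:ℝ)+2*s) = 2^((n:ℝ)+2*s) * (2*aT/ωT)^((1:ℝ)+θ) := by
          rw [Real.mul_rpow (by norm_num : (0:ℝ) ≤ 2) hr0.le]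
          congr 1
          rw [hrdef, ← Real.rpow_mul hbase0.le]
          congr 1
          rw [hθdef]
          field_simp
        have e2 : (2*aT/ωT)^((1:ℝ)+θ) = (2*aT/ωT) * (2*aT/ωT)^θ := by
          rw [Real.rpow_add hbase0, Real.rpow_one]
        have e3 : (2*aT/ωT)^θ = 2^θ * aT^θ / ωT^θ := by
          rw [Real.div_rpow (by positivity) hωT.le, Real.mul_rpow (by norm_num) haT0.le]
        have e4 : (4:ℝ)^((k:ℝ)-1) = 4^(k:ℝ)/4 := by
          rw [Real.rpow_sub (by norm_num : (0:ℝ) < 4), Real.rpow_one]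
        have e5 : ωT^((1:ℝ)+θ) = ωT * ωT^θ := by
          rw [Real.rpow_add hωT, Real.rpow_one]
        have e6 : (2:ℝ)^((n:ℝ)+2*s+θ+3) = 2^((n:ℝ)+2*s) * 2^θ * 8 := by
          rw [show (n:ℝ)+2*s+θ+3 = ((n:ℝ)+2*s) + θ + 3 by ring,
            Real.rpow_add (by norm_num : (0:ℝ) < 2), Real.rpow_add (by norm_num : (0:ℝ) < 2)]
          rw [show (3:ℝ) = ((3:ℕ):ℝ) by norm_num, Real.rpow_natCast]
          norm_num
        have e7 : aT^(-θ) = (aT^θ)⁻¹ := Real.rpow_neg haT0.le θ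
        have hpos1 : (0:ℝ) < 2^((n:ℝ)+2*s) := Real.rpow_pos_of_pos (by norm_num) _
        have hpos2 : (0:ℝ) < 2^θ := Real.rpow_pos_of_pos (by norm_num) _
        have hpos3 : (0:ℝ) < aT^θ := Real.rpow_pos_of_pos haT0 _
        have hpos4 : (0:ℝ) < ωT^θ := Real.rpow_pos_of_pos hωT _
        rw [hc₃def, e1, e2, e3, e4, e5, e6, e7]
        field_simp
        ring
      -- the inner integral estimate for x ∈ D k
      have hinner : ∀ x ∈ D k,
          ENNReal.ofReal (c₃ * 4^(k:ℝ) * aT ^ (-θ)) ≤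
            ∫⁻ y, ENNReal.ofReal (|f x - f y| ^ 2 / ‖x - y‖ ^ ((n:ℝ) + 2*s)) := by
        intro x hx
        set W := (ball x (2*r) \ ball x r) \ A (k-1) with hWdef
        have hWmeas : MeasurableSet W :=
          (measurableSet_ball.diff measurableSet_ball).diff (hAmeas _)
        -- W has large measure
        have hWvol : a (k-1) ≤ volume W := by
          have hsub2 : ball x (2*r) ⊆ W ∪ (ball x r ∪ A (k-1)) := by
            intro y hy
            by_cases h1 : y ∈ ball x r
            · exact Or.inr (Or.inl h1)
            by_cases h2 : y ∈ A (k-1)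
            · exact Or.inr (Or.inr h2)
            · exact Or.inl ⟨⟨hy, h1⟩, h2⟩
          have hm1 : volume (ball x (2*r)) ≤ volume W + (volume (ball x r) + a (k-1)) :=
            le_trans (measure_mono hsub2)
              (le_trans (measure_union_le _ _) (add_le_add_right (measure_union_le _ _) _))
          rw [hball1 x, hball2 x] at hm1
          have h2n : (8:ℝ≥0∞) ≤ 2^(n:ℕ) * 2 := by
            calc (8:ℝ≥0∞) = 2^(2:ℕ) * 2 := by norm_num
              _ ≤ 2^(n:ℕ) * 2 := mul_le_mul_left (pow_le_pow_right' (by norm_num) hn) _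
          have h8a : 8 * a (k-1) ≤ volume W + (2 * a (k-1) + a (k-1)) := by
            calc 8 * a (k-1) ≤ 2^(n:ℕ) * 2 * a (k-1) := mul_le_mul_left h2n _
              _ = 2^(n:ℕ) * (2 * a (k-1)) := by ring
              _ ≤ _ := hm1
          have hfin3 : 2 * a (k-1) + a (k-1) ≠ ⊤ := by
            simp [ENNReal.add_eq_top, ENNReal.mul_eq_top, hafin1]
          have h4a : a (k-1) + (2 * a (k-1) + a (k-1)) ≤ volume W + (2 * a (k-1) + a (k-1)) := by
            refine le_trans ?_ h8a
            have he : a (k-1) + (2 * a (k-1) + a (k-1)) = 4 * a (k-1) := by ring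
            rw [he]
            exact mul_le_mul_left (by norm_num) _
          exact (ENNReal.add_le_add_iff_right hfin3).mp h4a
        -- pointwise bound on W
        have hptW : ∀ y ∈ W, ENNReal.ofReal ((4:ℝ)^((k:ℝ)-1) / (2*r)^((n:ℝ)+2*s)) ≤
            ENNReal.ofReal (|f x - f y| ^ 2 / ‖x - y‖ ^ ((n:ℝ) + 2*s)) := by
          intro y hy
          obtain ⟨⟨hy2, hy1⟩, hyA⟩ := hy
          have hdy : dist y x < 2*r := mem_ball.mp hy2
          have hdy2 : r ≤ dist y x := by
            by_contra hcon
            push_neg at hcon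
            exact hy1 (mem_ball.mpr hcon)
          have hxy : ‖x - y‖ = dist y x := by rw [dist_eq_norm, norm_sub_rev]
          have hfy : |f y| ≤ (2:ℝ)^((k:ℝ)-1) := by
            simp only [hAdef, mem_setOf_eq, not_lt] at hyA
            rwa [show (((k-1:ℤ)):ℝ) = (k:ℝ)-1 by push_cast; ring] at hyA
          have hfx : (2:ℝ)^(k:ℝ) < |f x| := hx.1
          have h2k : (2:ℝ)^((k:ℝ)) = 2 * (2:ℝ)^((k:ℝ)-1) := by
            have h := Real.rpow_add (by norm_num : (0:ℝ) < 2) 1 ((k:ℝ)-1)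
            rw [Real.rpow_one] at h
            calc (2:ℝ)^((k:ℝ)) = (2:ℝ)^(1 + ((k:ℝ)-1)) := by
                  rw [show (1:ℝ) + ((k:ℝ)-1) = (k:ℝ) by ring]
              _ = 2 * (2:ℝ)^((k:ℝ)-1) := h
          have hlow : (2:ℝ)^((k:ℝ)-1) ≤ |f x - f y| := by
            have h1 : |f x| - |f y| ≤ |f x - f y| := abs_sub_abs_le_abs_sub _ _
            linarith
          apply ENNReal.ofReal_le_ofReal
          have h4 : (4:ℝ)^((k:ℝ)-1) = ((2:ℝ)^((k:ℝ)-1))^(2:ℕ) := by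
            have h22 : (4:ℝ) = (2:ℝ)^(2:ℝ) := by
              rw [show (2:ℝ)^(2:ℝ) = (2:ℝ)^((2:ℕ):ℝ) by norm_num, Real.rpow_natCast]
              norm_num
            rw [h22, ← Real.rpow_natCast ((2:ℝ)^((k:ℝ)-1)) 2,
              ← Real.rpow_mul (by norm_num : (0:ℝ) ≤ 2),
              ← Real.rpow_mul (by norm_num : (0:ℝ) ≤ 2)]
            congr 1
            push_cast
            ring
          have hnum : (4:ℝ)^((k:ℝ)-1) ≤ |f x - f y|^2 := by
            rw [h4]
            exact pow_le_pow_left₀ (Real.rpow_nonneg (by norm_num) _) hlow 2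
          have hden : ‖x - y‖ ^ ((n:ℝ)+2*s) ≤ (2*r)^((n:ℝ)+2*s) :=
            Real.rpow_le_rpow (norm_nonneg _) (by rw [hxy]; linarith) (by positivity)
          have hdenpos : 0 < ‖x - y‖ ^ ((n:ℝ)+2*s) :=
            Real.rpow_pos_of_pos (by rw [hxy]; linarith) _
          exact div_le_div₀ (sq_nonneg _) hnum hdenpos hden
        calc ENNReal.ofReal (c₃ * 4^(k:ℝ) * aT ^ (-θ))
            = ENNReal.ofReal ((4:ℝ)^((k:ℝ)-1) / (2*r)^((n:ℝ)+2*s)) * a (k-1) := by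
              rw [hc₃k, ENNReal.ofReal_mul (by positivity), haTdef,
                ENNReal.ofReal_toReal hafin1]
          _ ≤ ENNReal.ofReal ((4:ℝ)^((k:ℝ)-1) / (2*r)^((n:ℝ)+2*s)) * volume W :=
              mul_le_mul_right hWvol _
          _ = ∫⁻ _ in W, ENNReal.ofReal ((4:ℝ)^((k:ℝ)-1) / (2*r)^((n:ℝ)+2*s)) :=
              (setLIntegral_const _ _).symm
          _ ≤ ∫⁻ y in W, ENNReal.ofReal (|f x - f y| ^ 2 / ‖x - y‖ ^ ((n:ℝ) + 2*s)) :=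
              lintegral_mono_ae ((ae_restrict_iff' hWmeas).2 (ae_of_all _ hptW))
          _ ≤ ∫⁻ y, ENNReal.ofReal (|f x - f y| ^ 2 / ‖x - y‖ ^ ((n:ℝ) + 2*s)) :=
              setLIntegral_le_lintegral _ _
      -- conclude the per-k bound
      have hconst : ENNReal.ofReal (c₃ * 4^(k:ℝ) * aT ^ (-θ))
          = ENNReal.ofReal c₃ * ((4:ℝ≥0∞) ^ (k:ℝ) * a (k-1) ^ (-θ)) := by
        rw [ENNReal.ofReal_mul (by positivity), ENNReal.ofReal_mul hc₃.le]
        rw [mul_assoc]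
        congr 1
        congr 1
        · rw [show (4:ℝ≥0∞) = ENNReal.ofReal (4:ℝ) by simp,
            ENNReal.ofReal_rpow_of_pos (by norm_num : (0:ℝ) < 4)]
        · rw [← ENNReal.ofReal_rpow_of_pos haT0, haTdef, ENNReal.ofReal_toReal hafin1]
      calc ENNReal.ofReal c₃ * ((4:ℝ≥0∞) ^ (k:ℝ) * a (k-1) ^ (-θ) * volume (D k))
          = (ENNReal.ofReal c₃ * ((4:ℝ≥0∞) ^ (k:ℝ) * a (k-1) ^ (-θ))) * volume (D k) := by
            ring
        _ = ENNReal.ofReal (c₃ * 4^(k:ℝ) * aT ^ (-θ)) * volume (D k) := by rw [hconst]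
        _ = ∫⁻ _ in D k, ENNReal.ofReal (c₃ * 4^(k:ℝ) * aT ^ (-θ)) :=
            (setLIntegral_const _ _).symm
        _ ≤ ∫⁻ x in D k, (∫⁻ y, ENNReal.ofReal (|f x - f y| ^ 2 / ‖x - y‖ ^ ((n:ℝ) + 2*s))) :=
            lintegral_mono_ae ((ae_restrict_iff' (hDmeas k)).2 (ae_of_all _ hinner))
  -- assemble Step B into an integral bound
  have hB : ENNReal.ofReal c₃ * (4 * T) ≤
      ∫⁻ x, ∫⁻ y, ENNReal.ofReal (|f x - f y| ^ 2 / ‖x - y‖ ^ ((n:ℝ) + 2*s)) := by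
    have hshiftV : (∑' k : ℤ, (4:ℝ≥0∞) ^ (k:ℝ) * a (k-1) ^ (-θ) * volume (D k)) = 4 * T := by
      have he := (Equiv.addRight (1:ℤ)).tsum_eq
        (fun k : ℤ => (4:ℝ≥0∞) ^ (k:ℝ) * a (k-1) ^ (-θ) * volume (D k))
      rw [← he]
      have hterm : ∀ c : ℤ, (4:ℝ≥0∞) ^ (((c+1:ℤ)):ℝ) * a (c+1-1) ^ (-θ) * volume (D (c+1))
          = 4 * ((4:ℝ≥0∞) ^ (c:ℝ) * a c ^ (-θ) * volume (D (c+1))) := by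
        intro c
        rw [show ((c+1:ℤ):ℝ) = (c:ℝ)+1 by push_cast; ring, show (c+1-1 : ℤ) = c by omega]
        rw [ENNReal.rpow_add _ _ h4ne0 h4netop, ENNReal.rpow_one]
        ring
      calc (∑' c : ℤ, (4:ℝ≥0∞) ^ (((c+1:ℤ)):ℝ) * a (c+1-1) ^ (-θ) * volume (D (c+1)))
          = ∑' c : ℤ, 4 * ((4:ℝ≥0∞) ^ (c:ℝ) * a c ^ (-θ) * volume (D (c+1))) :=
            tsum_congr hterm
        _ = 4 * T := ENNReal.tsum_mul_left
    calc ENNReal.ofReal c₃ * (4 * T)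
        = ∑' k : ℤ, ENNReal.ofReal c₃ * ((4:ℝ≥0∞) ^ (k:ℝ) * a (k-1) ^ (-θ) * volume (D k)) := by
          rw [ENNReal.tsum_mul_left, hshiftV]
      _ ≤ ∑' k : ℤ, ∫⁻ x in D k, (∫⁻ y, ENNReal.ofReal (|f x - f y| ^ 2 / ‖x - y‖ ^ ((n:ℝ) + 2*s))) :=
          ENNReal.tsum_le_tsum hBk
      _ = ∫⁻ x in (⋃ k : ℤ, D k), (∫⁻ y, ENNReal.ofReal (|f x - f y| ^ 2 / ‖x - y‖ ^ ((n:ℝ) + 2*s))) :=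
          (lintegral_iUnion hDmeas hDdisj _).symm
      _ ≤ ∫⁻ x, ∫⁻ y, ENNReal.ofReal (|f x - f y| ^ 2 / ‖x - y‖ ^ ((n:ℝ) + 2*s)) :=
          setLIntegral_le_lintegral _ _
  -- final chain
  have hcc : ENNReal.ofReal (2*C₀/c₃) * ENNReal.ofReal c₃ = 2 * ENNReal.ofReal C₀ := by
    rw [← ENNReal.ofReal_mul (by positivity)]
    rw [show 2*C₀/c₃*c₃ = 2*C₀ by field_simp]
    rw [ENNReal.ofReal_mul (by norm_num : (0:ℝ) ≤ 2), ENNReal.ofReal_ofNat]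
  calc eLpNorm f (ENNReal.ofReal preal) volume ^ 2
      ≤ 4 * S := hLHS
    _ ≤ 4 * (ENNReal.ofReal C₀ * R) := mul_le_mul_right hSR _
    _ ≤ 4 * (ENNReal.ofReal C₀ * (2 * T)) := mul_le_mul_right (mul_le_mul_right hRT _) _
    _ = ENNReal.ofReal (2*C₀/c₃) * (ENNReal.ofReal c₃ * (4 * T)) := by
        have hassoc : ENNReal.ofReal (2*C₀/c₃) * (ENNReal.ofReal c₃ * (4 * T))
            = (ENNReal.ofReal (2*C₀/c₃) * ENNReal.ofReal c₃) * (4*T) := by ring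
        rw [hassoc, hcc]
        ring
    _ ≤ ENNReal.ofReal (2*C₀/c₃) *
        ∫⁻ x, ∫⁻ y, ENNReal.ofReal (|f x - f y| ^ 2 / ‖x - y‖ ^ ((n:ℝ) + 2*s)) :=
        mul_le_mul_right hB _
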